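/- Let φ_1, ..., φ_n be unit norm vectors in ℂ^d with d ≥ 1. Then {φ_i}_{i=1}^n is scalable if and only if (1/d)·I_d lies in the convex hull of the set {φ_iφ_i* : i = 1, ..., n}, where the convex hull is taken in the real vector space of d×d Hermitian matrices. -/

import Mathlib

/-- The outer product `x x*` of a vector `x ∈ ℂ^d` with itself:
the `d × d` matrix whose `(j,k)` entry is `x j * conj (x k)`. -/
def outer {d : ℕ} (x : EuclideanSpace ℂ (Fin d)) : Matrix (Fin d) (Fin d) ℂ :=
  Matrix.of fun j k => x j * starRingEnd ℂ (x k)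

lemma trace_outer {d : ℕ} (x : EuclideanSpace ℂ (Fin d)) :
    (outer x).trace = (‖x‖ : ℂ) ^ 2 := by
  have h : (inner ℂ x x : ℂ) = (‖x‖ : ℂ) ^ 2 := inner_self_eq_norm_sq_to_K x
  rw [← h, PiLp.inner_apply]
  simp [Matrix.trace, outer, Matrix.diag, PiLp.inner_apply, mul_comm, RCLike.inner_apply, Complex.mul_conj, Complex.normSq_eq_norm_sq]

/-- A unit norm family `{φ_i}_{i=1}^n ⊆ ℂ^d` is scalable (there exist nonnegative reals
`w_i` with `Σ w_i φ_i φ_i* = I_d`) iff `(1/d) I_d` lies in the convex hull of the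
outer products `{φ_i φ_i*}`. -/
theorem stmt5 {d n : ℕ} (hd : 1 ≤ d) (φ : Fin n → EuclideanSpace ℂ (Fin d))
    (hφ : ∀ i, ‖φ i‖ = 1) :
    (∃ w : Fin n → ℝ, (∀ i, 0 ≤ w i) ∧
        ∑ i, w i • outer (φ i) = (1 : Matrix (Fin d) (Fin d) ℂ)) ↔
      (d : ℝ)⁻¹ • (1 : Matrix (Fin d) (Fin d) ℂ) ∈
        convexHull ℝ (Set.range fun i => outer (φ i)) := by
  have hd0 : (d : ℝ) ≠ 0 := by positivity
  have htr : ∀ i, (outer (φ i)).trace = 1 := by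
    intro i; rw [trace_outer, hφ]; norm_num
  constructor
  · rintro ⟨w, hw0, hw⟩
    have hsum : ∑ i, w i = d := by
      have h1 := congrArg Matrix.trace hw
      rw [Matrix.trace_sum] at h1
      simp only [Matrix.trace_smul, htr, Matrix.trace_one, Complex.real_smul, mul_one,
        Fintype.card_fin, ← Complex.ofReal_sum] at h1
      exact_mod_cast h1
    refine mem_convexHull_of_exists_fintype (fun i => w i / d)
      (fun i => outer (φ i)) (fun i => div_nonneg (hw0 i) (by positivity)) ?_
      (fun i => Set.mem_range_self i) ?_
    · rw [← Finset.sum_div, hsum, div_self hd0]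
    · rw [← hw, Finset.smul_sum]
      refine Finset.sum_congr rfl fun i _ => ?_
      simp [div_eq_inv_mul, smul_smul]
  · intro h
    rw [convexHull_range_eq_exists_affineCombination] at h
    obtain ⟨s, w, hw0, hw1, hx⟩ := h
    rw [Finset.affineCombination_eq_linear_combination _ _ _ hw1] at hx
    refine ⟨fun i => if i ∈ s then (d : ℝ) * w i else 0, ?_, ?_⟩
    · intro i
      dsimp only
      split
      · exact mul_nonneg (by positivity) (hw0 i (by assumption))
      · exact le_refl 0
    · have h2 : ∑ i, (if i ∈ s then (d : ℝ) * w i else 0) • outer (φ i)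
          = ∑ i ∈ s, ((d : ℝ) * w i) • outer (φ i) := by
        simp [ite_smul]
      rw [h2]
      have h3 : ∑ i ∈ s, ((d : ℝ) * w i) • outer (φ i)
          = (d : ℝ) • ∑ i ∈ s, w i • outer (φ i) := by
        rw [Finset.smul_sum]
        exact Finset.sum_congr rfl fun i _ => (smul_smul _ _ _).symm
      rw [h3, hx, smul_smul, mul_inv_cancel₀ hd0, one_smul]
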